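/- If f : {-1,1}^n → {-1,1} has sign degree deg_±(f) = d (every sign-representing polynomial of f has degree ≥ d), then the signed monomial complexity of its Krause–Pudlák lift satisfies mon_±(f^op) ≥ 2^d. -/

import Mathlib

open scoped BigOperators Classical

noncomputable section

/-- sign value of a bit: `true` ↦ -1, `false` ↦ 1 (±1 encoding of the cube). -/
def sgnv (b : Bool) : ℝ := if b then -1 else 1

/-- the Fourier character χ_S on the cube. -/
def chi {ι : Type*} (S : Finset ι) (x : ι → Bool) : ℝ := ∏ i ∈ S, sgnv (x i)

/-- evaluation of the multilinear polynomial with coefficients `c`. -/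
def pEval {ι : Type*} [Fintype ι] [DecidableEq ι] (c : Finset ι → ℝ) (x : ι → Bool) : ℝ :=
  ∑ S : Finset ι, c S * chi S x

/-- `c` sign represents `f`. -/
def SignRep {ι : Type*} [Fintype ι] [DecidableEq ι] (c : Finset ι → ℝ)
    (f : (ι → Bool) → ℝ) : Prop := ∀ x, 0 < pEval c x * f x

/-- number of monomials (nonzero coefficients) of the polynomial `c`. -/
def monCount {ι : Type*} [Fintype ι] [DecidableEq ι] (c : Finset ι → ℝ) : ℕ :=
  (Finset.univ.filter fun S : Finset ι => c S ≠ 0).card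

/-- the Krause–Pudlák selector lift `f^op : {-1,1}^{3n} → {-1,1}`. -/
def fop {n : ℕ} (f : (Fin n → Bool) → ℝ) : ((Fin n ⊕ Fin n ⊕ Fin n) → Bool) → ℝ :=
  fun v => f (fun i =>
    if v (Sum.inr (Sum.inr i)) then v (Sum.inl i) else v (Sum.inr (Sum.inl i)))

namespace KP
open Finset

lemma sgnv_ne_zero (b : Bool) : sgnv b ≠ 0 := by cases b <;> simp [sgnv]

lemma sgnv_not (b : Bool) : sgnv (!b) = - sgnv b := by cases b <;> simp [sgnv]

variable {n : ℕ}

def xpart (S : Finset (Fin n ⊕ Fin n ⊕ Fin n)) : Finset (Fin n) :=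
  univ.filter (fun i => Sum.inl i ∈ S)
def ypart (S : Finset (Fin n ⊕ Fin n ⊕ Fin n)) : Finset (Fin n) :=
  univ.filter (fun i => Sum.inr (Sum.inl i) ∈ S)
def zpart (S : Finset (Fin n ⊕ Fin n ⊕ Fin n)) : Finset (Fin n) :=
  univ.filter (fun i => Sum.inr (Sum.inr i) ∈ S)

def V (w b z : Fin n → Bool) : (Fin n ⊕ Fin n ⊕ Fin n) → Bool :=
  Sum.elim (fun i => if z i then w i else b i) (Sum.elim (fun i => if z i then b i else w i) z)

def Surv (z : Fin n → Bool) (S : Finset (Fin n ⊕ Fin n ⊕ Fin n)) : Prop :=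
  (∀ i ∈ xpart S, z i = true) ∧ (∀ i ∈ ypart S, z i = false)

lemma fop_V (f : (Fin n → Bool) → ℝ) (w b z : Fin n → Bool) : fop f (V w b z) = f w := by
  unfold fop V
  congr 1
  funext i
  by_cases h : z i <;> simp [h]

lemma chi_update {ι' : Type*} [DecidableEq ι'] {S : Finset ι'} {v : ι' → Bool} {j : ι'}
    (hj : j ∈ S) : chi S (Function.update v j (!(v j))) = - chi S v := by
  unfold chi
  rw [← Finset.mul_prod_erase _ _ hj, ← Finset.mul_prod_erase _ (fun i => sgnv (v i)) hj]
  have h1 : ∏ i ∈ S.erase j, sgnv (Function.update v j (!(v j)) i)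
      = ∏ i ∈ S.erase j, sgnv (v i) :=
    Finset.prod_congr rfl fun i hi => by
      rw [Function.update_of_ne (Finset.ne_of_mem_erase hi)]
  rw [h1, Function.update_self, sgnv_not]
  ring

lemma chi_split (S : Finset (Fin n ⊕ Fin n ⊕ Fin n)) (v : (Fin n ⊕ Fin n ⊕ Fin n) → Bool) :
    chi S v = (∏ i ∈ xpart S, sgnv (v (Sum.inl i))) *
      ((∏ i ∈ ypart S, sgnv (v (Sum.inr (Sum.inl i)))) *
        (∏ i ∈ zpart S, sgnv (v (Sum.inr (Sum.inr i))))) := by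
  unfold chi xpart ypart zpart
  rw [← Finset.filter_univ_mem S, Finset.prod_filter, Fintype.prod_sum_type,
    Fintype.prod_sum_type, Finset.prod_filter, Finset.prod_filter, Finset.prod_filter]
  simp only [Finset.mem_filter, Finset.mem_univ, true_and]


def zf (S : Finset (Fin n ⊕ Fin n ⊕ Fin n)) (z : Fin n → Bool) : ℝ :=
  ∏ i ∈ zpart S, sgnv (z i)

lemma zf_ne_zero (S : Finset (Fin n ⊕ Fin n ⊕ Fin n)) (z : Fin n → Bool) : zf S z ≠ 0 :=
  Finset.prod_ne_zero_iff.mpr fun i _ => sgnv_ne_zero _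

lemma V_update (w b z : Fin n → Bool) (i₀ : Fin n) :
    V w (Function.update b i₀ (!(b i₀))) z =
      Function.update (V w b z) (if z i₀ then Sum.inr (Sum.inl i₀) else Sum.inl i₀)
        (!(V w b z (if z i₀ then Sum.inr (Sum.inl i₀) else Sum.inl i₀))) := by
  funext j
  rcases j with i | i | i <;> cases hz : z i₀ <;> by_cases hi : i = i₀ <;>
    simp_all [V, Function.update]

lemma sum_chi_zero {S : Finset (Fin n ⊕ Fin n ⊕ Fin n)} {w z : Fin n → Bool}
    (h : ¬ Surv z S) : ∑ b : Fin n → Bool, chi S (V w b z) = 0 := by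
  have hex : ∃ i₀ : Fin n, (if z i₀ then Sum.inr (Sum.inl i₀) else Sum.inl i₀) ∈ S := by
    unfold Surv at h
    rw [not_and_or] at h
    rcases h with h | h
    · push_neg at h
      obtain ⟨i₀, hi, hzi⟩ := h
      have h1 : Sum.inl i₀ ∈ S := (Finset.mem_filter.mp hi).2
      have hz : z i₀ = false := by simpa using hzi
      exact ⟨i₀, by simp [hz, h1]⟩
    · push_neg at h
      obtain ⟨i₀, hi, hzi⟩ := h
      have h1 : Sum.inr (Sum.inl i₀) ∈ S := (Finset.mem_filter.mp hi).2
      have hz : z i₀ = true := by simpa using hzi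
      exact ⟨i₀, by simp [hz, h1]⟩
  obtain ⟨i₀, hj⟩ := hex
  set g : (Fin n → Bool) → (Fin n → Bool) := fun b => Function.update b i₀ (!(b i₀)) with hgdef
  have hflip : ∀ b, chi S (V w (g b) z) = - chi S (V w b z) := by
    intro b
    rw [hgdef]
    simp only
    rw [V_update]
    exact chi_update hj
  have hinv : Function.Involutive g := by
    intro b
    funext j
    by_cases hjj : j = i₀
    · subst hjj; simp [hgdef]
    · simp [hgdef, Function.update_of_ne hjj]
  have h1 : ∑ b : Fin n → Bool, chi S (V w (g b) z) = ∑ b : Fin n → Bool, chi S (V w b z) := by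
    have := Equiv.sum_comp hinv.toPerm (fun b => chi S (V w b z))
    simpa [Function.Involutive.coe_toPerm] using this
  have h2 : ∑ b : Fin n → Bool, chi S (V w (g b) z)
      = - ∑ b : Fin n → Bool, chi S (V w b z) := by
    simp only [hflip]
    exact Finset.sum_neg_distrib _
  have := h1.symm.trans h2
  linarith

lemma chi_V_surv {S : Finset (Fin n ⊕ Fin n ⊕ Fin n)} {w b z : Fin n → Bool}
    (h : Surv z S) :
    chi S (V w b z) = chi (xpart S ∪ ypart S) w * zf S z := by
  rw [chi_split]
  have hx : ∀ i ∈ xpart S, sgnv (V w b z (Sum.inl i)) = sgnv (w i) := by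
    intro i hi; simp [V, h.1 i hi]
  have hy : ∀ i ∈ ypart S, sgnv (V w b z (Sum.inr (Sum.inl i))) = sgnv (w i) := by
    intro i hi; simp [V, h.2 i hi]
  rw [Finset.prod_congr rfl hx, Finset.prod_congr rfl hy]
  have hdisj : Disjoint (xpart S) (ypart S) := by
    rw [Finset.disjoint_left]
    intro i h1 h2
    have e1 := h.1 i h1
    have e2 := h.2 i h2
    simp [e1] at e2
  rw [chi, Finset.prod_union hdisj]
  have hzv : ∀ i, V w b z (Sum.inr (Sum.inr i)) = z i := fun i => rfl
  simp only [hzv, zf]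
  ring

def qc (c : Finset (Fin n ⊕ Fin n ⊕ Fin n) → ℝ) (z : Fin n → Bool) (T : Finset (Fin n)) : ℝ :=
  ∑ S ∈ Finset.univ.filter (fun S => xpart S ∪ ypart S = T),
    (if Surv z S then c S * zf S z else 0)

lemma qc_eval (c : Finset (Fin n ⊕ Fin n ⊕ Fin n) → ℝ) (z w : Fin n → Bool) :
    (2 ^ n : ℝ) * pEval (qc c z) w = ∑ b : Fin n → Bool, pEval c (V w b z) := by
  have hL : pEval (qc c z) w = ∑ S : Finset (Fin n ⊕ Fin n ⊕ Fin n),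
      (if Surv z S then c S * zf S z else 0) * chi (xpart S ∪ ypart S) w := by
    unfold pEval qc
    rw [← Finset.sum_fiberwise Finset.univ (fun S => xpart S ∪ ypart S)
        (fun S => (if Surv z S then c S * zf S z else 0) * chi (xpart S ∪ ypart S) w)]
    refine Finset.sum_congr rfl fun T _ => ?_
    rw [Finset.sum_mul]
    refine Finset.sum_congr rfl fun S hS => ?_
    rw [(Finset.mem_filter.mp hS).2]
  have hR : ∑ b : Fin n → Bool, pEval c (V w b z)
      = ∑ S : Finset (Fin n ⊕ Fin n ⊕ Fin n),
        (if Surv z S then (2 ^ n : ℝ) * ((c S * zf S z) * chi (xpart S ∪ ypart S) w)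
          else 0) := by
    unfold pEval
    rw [Finset.sum_comm]
    refine Finset.sum_congr rfl fun S _ => ?_
    by_cases hS : Surv z S
    · rw [if_pos hS, ← Finset.mul_sum]
      have hsum : ∑ b : Fin n → Bool, chi S (V w b z)
          = (2 ^ n : ℝ) * (chi (xpart S ∪ ypart S) w * zf S z) := by
        rw [Finset.sum_congr rfl fun b _ => chi_V_surv hS, Finset.sum_const]
        simp [Finset.card_univ, nsmul_eq_mul]
      rw [hsum]
      ring
    · rw [if_neg hS, ← Finset.mul_sum, sum_chi_zero hS, mul_zero]
  rw [hL, hR, Finset.mul_sum]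
  refine Finset.sum_congr rfl fun S _ => ?_
  by_cases hS : Surv z S
  · rw [if_pos hS, if_pos hS]
  · rw [if_neg hS, if_neg hS]
    ring

lemma qc_signrep {c : Finset (Fin n ⊕ Fin n ⊕ Fin n) → ℝ} {f : (Fin n → Bool) → ℝ}
    (hrep : SignRep c (fop f)) (z : Fin n → Bool) : SignRep (qc c z) f := by
  intro w
  have hpos : 0 < ∑ b : Fin n → Bool, pEval c (V w b z) * f w := by
    apply Finset.sum_pos
    · intro b _
      have h := hrep (V w b z)
      rwa [fop_V] at h
    · exact Finset.univ_nonempty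
  have h2 : (0 : ℝ) < 2 ^ n := by positivity
  have key : (2 ^ n : ℝ) * (pEval (qc c z) w * f w)
      = ∑ b : Fin n → Bool, pEval c (V w b z) * f w := by
    rw [← Finset.sum_mul, ← qc_eval]
    ring
  nlinarith [hpos, key, h2]

lemma card_surv_le {d : ℕ} {S : Finset (Fin n ⊕ Fin n ⊕ Fin n)}
    (hd : d ≤ (xpart S ∪ ypart S).card) :
    (Finset.univ.filter fun z : Fin n → Bool => Surv z S).card ≤ 2 ^ (n - d) := by
  set U := xpart S ∪ ypart S with hU
  have h1 : (Finset.univ.filter fun z : Fin n → Bool => Surv z S).card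
      ≤ Fintype.card ((↥(Uᶜ : Finset (Fin n))) → Bool) := by
    rw [← Finset.card_univ]
    apply Finset.card_le_card_of_injOn (fun z => fun i => z i.1)
      (fun z _ => Finset.mem_univ _)
    intro z1 hz1 z2 hz2 heq
    simp only [Finset.coe_filter, Set.mem_setOf_eq, Finset.mem_univ, true_and] at hz1 hz2
    funext i
    by_cases hi : i ∈ U
    · rcases Finset.mem_union.mp hi with hx | hy
      · rw [hz1.1 i hx, hz2.1 i hx]
      · rw [hz1.2 i hy, hz2.2 i hy]
    · exact congrFun heq ⟨i, Finset.mem_compl.mpr hi⟩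
  have h2 : Fintype.card ((↥(Uᶜ : Finset (Fin n))) → Bool) = 2 ^ ((Uᶜ : Finset (Fin n)).card) := by
    rw [Fintype.card_fun, Fintype.card_bool, Fintype.card_coe]
  have h3 : ((Uᶜ : Finset (Fin n)).card) = n - U.card := by
    rw [Finset.card_compl, Fintype.card_fin]
  have h4 : (2 : ℕ) ^ (n - U.card) ≤ 2 ^ (n - d) :=
    Nat.pow_le_pow_right (by norm_num) (Nat.sub_le_sub_left hd n)
  calc (Finset.univ.filter fun z : Fin n → Bool => Surv z S).card
      ≤ Fintype.card ((↥(Uᶜ : Finset (Fin n))) → Bool) := h1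
    _ = 2 ^ ((Uᶜ : Finset (Fin n)).card) := h2
    _ = 2 ^ (n - U.card) := by rw [h3]
    _ ≤ 2 ^ (n - d) := h4

end KP

open KP

/-- if every sign-representing polynomial of `f` has degree at least
`d` (i.e. `deg_±(f) ≥ d`), then every sign-representing polynomial of the
Krause–Pudlák lift `f^op` has at least `2^d` monomials, i.e. `mon_±(f^op) ≥ 2^d`. -/
theorem lift_monomial_complexity (n d : ℕ) (f : (Fin n → Bool) → ℝ)
    (hf : ∀ x, f x = 1 ∨ f x = -1)
    (hdeg : ∀ c : Finset (Fin n) → ℝ, SignRep c f → ∃ S, c S ≠ 0 ∧ d ≤ S.card) :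
    ∀ c : Finset (Fin n ⊕ Fin n ⊕ Fin n) → ℝ, SignRep c (fop f) →
      2 ^ d ≤ monCount c := by
  intro c hrep
  have hbig : ∀ z : Fin n → Bool, ∃ S : Finset (Fin n ⊕ Fin n ⊕ Fin n),
      c S ≠ 0 ∧ Surv z S ∧ d ≤ (xpart S ∪ ypart S).card := by
    intro z
    obtain ⟨T, hT0, hTd⟩ := hdeg (qc c z) (qc_signrep hrep z)
    obtain ⟨S, hSmem, hSne⟩ := Finset.exists_ne_zero_of_sum_ne_zero hT0
    have hsv : Surv z S := by
      by_contra hns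
      rw [if_neg hns] at hSne
      exact hSne rfl
    rw [if_pos hsv] at hSne
    have hc : c S ≠ 0 := fun h => hSne (by rw [h, zero_mul])
    have hTS : xpart S ∪ ypart S = T := (Finset.mem_filter.mp hSmem).2
    exact ⟨S, hc, hsv, by rw [hTS]; exact hTd⟩
  set supp := Finset.univ.filter
    (fun S : Finset (Fin n ⊕ Fin n ⊕ Fin n) => c S ≠ 0 ∧ d ≤ (xpart S ∪ ypart S).card) with hsupp
  have hcover : (Finset.univ : Finset (Fin n → Bool)) ⊆
      supp.biUnion (fun S => Finset.univ.filter fun z => Surv z S) := by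
    intro z _
    obtain ⟨S, h0, hsv, hdd⟩ := hbig z
    exact Finset.mem_biUnion.mpr ⟨S, Finset.mem_filter.mpr ⟨Finset.mem_univ _, h0, hdd⟩,
      Finset.mem_filter.mpr ⟨Finset.mem_univ _, hsv⟩⟩
  have hdn : d ≤ n := by
    obtain ⟨S, _, _, hdd⟩ := hbig (fun _ => true)
    calc d ≤ (xpart S ∪ ypart S).card := hdd
      _ ≤ Finset.univ.card := Finset.card_le_univ _
      _ = n := by simp
  have hcard : 2 ^ n ≤ supp.card * 2 ^ (n - d) := by
    calc (2 : ℕ) ^ n = (Finset.univ : Finset (Fin n → Bool)).card := by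
          simp [Finset.card_univ]
      _ ≤ (supp.biUnion (fun S => Finset.univ.filter fun z => Surv z S)).card :=
          Finset.card_le_card hcover
      _ ≤ ∑ S ∈ supp, (Finset.univ.filter fun z => Surv z S).card :=
          Finset.card_biUnion_le
      _ ≤ ∑ _S ∈ supp, 2 ^ (n - d) :=
          Finset.sum_le_sum fun S hS => card_surv_le (Finset.mem_filter.mp hS).2.2
      _ = supp.card * 2 ^ (n - d) := by
          rw [Finset.sum_const, smul_eq_mul]
  have hsuppm : supp.card ≤ monCount c := by
    apply Finset.card_le_card
    intro S hS
    exact Finset.mem_filter.mpr ⟨Finset.mem_univ _, (Finset.mem_filter.mp hS).2.1⟩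
  have hpow : 2 ^ (n - d) * 2 ^ d = 2 ^ n := by
    rw [← pow_add, Nat.sub_add_cancel hdn]
  have : 2 ^ (n - d) * 2 ^ d ≤ 2 ^ (n - d) * monCount c := by
    rw [hpow]
    calc 2 ^ n ≤ supp.card * 2 ^ (n - d) := hcard
      _ ≤ monCount c * 2 ^ (n - d) := Nat.mul_le_mul_right _ hsuppm
      _ = 2 ^ (n - d) * monCount c := Nat.mul_comm _ _
  exact Nat.le_of_mul_le_mul_left this (Nat.pow_pos (by norm_num))

end
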